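/- The softmax map is 1/2-Lipschitz in the Euclidean norm: for all z, z' ∈ ℝⁿ, ‖σ(z) − σ(z')‖₂ ≤ (1/2)‖z − z'‖₂. -/

import Mathlib

open Finset

/-- Softmax as a map on Euclidean space `ℝⁿ` (with the `ℓ²` norm). -/
noncomputable def softmaxE {n : ℕ} (z : EuclideanSpace ℝ (Fin n)) :
    EuclideanSpace ℝ (Fin n) :=
  WithLp.toLp 2 (fun i => Real.exp (z i) / ∑ j, Real.exp (z j))

section Aux

variable {n : ℕ}

lemma shift_le (p v : Fin n → ℝ) (hs : ∑ i, p i = 1) (c : ℝ) :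
    ∑ i, p i * (v i - ∑ j, p j * v j) ^ 2 ≤ ∑ i, p i * (v i - c) ^ 2 := by
  have expand : ∀ d : ℝ, ∑ i, p i * (v i - d) ^ 2
      = ∑ i, p i * v i ^ 2 - 2 * d * (∑ i, p i * v i) + d ^ 2 := by
    intro d
    have h1 : ∀ i ∈ Finset.univ (α := Fin n), p i * (v i - d) ^ 2
        = p i * v i ^ 2 - 2 * d * (p i * v i) + d ^ 2 * p i := fun i _ => by ring
    rw [Finset.sum_congr rfl h1, Finset.sum_add_distrib, Finset.sum_sub_distrib,
      ← Finset.mul_sum, ← Finset.mul_sum, hs, mul_one]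
  rw [expand, expand]
  nlinarith [sq_nonneg ((∑ i, p i * v i) - c)]

lemma centered_le (hn : Nonempty (Fin n)) (p v : Fin n → ℝ) (hp : ∀ i, 0 ≤ p i)
    (hs : ∑ i, p i = 1) :
    ∑ i, p i * (v i - ∑ j, p j * v j) ^ 2 ≤ 1 / 2 * ∑ i, v i ^ 2 := by
  obtain ⟨a, -, ha⟩ := Finset.exists_max_image Finset.univ v ⟨hn.some, Finset.mem_univ _⟩
  obtain ⟨b, -, hb⟩ := Finset.exists_min_image Finset.univ v ⟨hn.some, Finset.mem_univ _⟩
  have h1 : ∑ i, p i * (v i - (v a + v b) / 2) ^ 2 ≤ ∑ i, p i * ((v a - v b) / 2) ^ 2 :=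
    Finset.sum_le_sum fun i _ => by
      have h2 := ha i (Finset.mem_univ i)
      have h3 := hb i (Finset.mem_univ i)
      have h4 : (v i - (v a + v b) / 2) ^ 2 ≤ ((v a - v b) / 2) ^ 2 := by nlinarith
      nlinarith [hp i]
  have h5 : ∑ i, p i * ((v a - v b) / 2) ^ 2 = ((v a - v b) / 2) ^ 2 := by
    rw [← Finset.sum_mul, hs, one_mul]
  have h6 : ((v a - v b) / 2) ^ 2 ≤ 1 / 2 * ∑ i, v i ^ 2 := by
    by_cases hab : a = b
    · have h9 : 0 ≤ ∑ i, v i ^ 2 := Finset.sum_nonneg fun i _ => sq_nonneg _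
      have h10 : ((v a - v b) / 2) ^ 2 = 0 := by rw [hab]; ring
      rw [h10]; linarith
    · have h7 : v a ^ 2 + v b ^ 2 ≤ ∑ i, v i ^ 2 := by
        have h8 : ∑ i ∈ ({a, b} : Finset (Fin n)), v i ^ 2 ≤ ∑ i, v i ^ 2 :=
          Finset.sum_le_sum_of_subset_of_nonneg (by simp) (fun i _ _ => sq_nonneg (v i))
        rwa [Finset.sum_pair hab] at h8
      nlinarith [sq_nonneg (v a + v b)]
  calc ∑ i, p i * (v i - ∑ j, p j * v j) ^ 2
      ≤ ∑ i, p i * (v i - (v a + v b) / 2) ^ 2 := shift_le p v hs _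
    _ ≤ ∑ i, p i * ((v a - v b) / 2) ^ 2 := h1
    _ = ((v a - v b) / 2) ^ 2 := h5
    _ ≤ 1 / 2 * ∑ i, v i ^ 2 := h6

lemma sq_sum_bound (hn : Nonempty (Fin n)) (p v : Fin n → ℝ) (hp : ∀ i, 0 ≤ p i)
    (hs : ∑ i, p i = 1) :
    ∑ i, (p i * (v i - ∑ j, p j * v j)) ^ 2 ≤ 1 / 4 * ∑ i, v i ^ 2 := by
  set s := ∑ j, p j * v j with hsv
  set w : Fin n → ℝ := fun i => p i * (v i - s) with hw
  set t := ∑ j, p j * w j with ht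
  have hXeq : ∑ i, w i ^ 2 = ∑ i, p i * ((w i - t) * (v i - s)) := by
    have l1 : ∑ i, w i ^ 2 = ∑ i, p i * (w i * v i) - s * ∑ i, p i * w i := by
      have e : ∀ i ∈ Finset.univ (α := Fin n), w i ^ 2
          = p i * (w i * v i) - s * (p i * w i) := fun i _ => by rw [hw]; ring
      rw [Finset.sum_congr rfl e, Finset.sum_sub_distrib, ← Finset.mul_sum]
    have l2 : ∑ i, p i * ((w i - t) * (v i - s))
        = ∑ i, p i * (w i * v i) - s * ∑ i, p i * w i := by
      have e : ∀ i ∈ Finset.univ (α := Fin n), p i * ((w i - t) * (v i - s))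
          = p i * (w i * v i) - s * (p i * w i) - t * (p i * v i) + (t * s) * p i :=
        fun i _ => by ring
      rw [Finset.sum_congr rfl e, Finset.sum_add_distrib, Finset.sum_sub_distrib,
        Finset.sum_sub_distrib, ← Finset.mul_sum, ← Finset.mul_sum, ← Finset.mul_sum, hs,
        ← hsv, ← ht]
      ring
    rw [l1, l2]
  have hcs : (∑ i, p i * ((w i - t) * (v i - s))) ^ 2
      ≤ (∑ i, p i * (w i - t) ^ 2) * (∑ i, p i * (v i - s) ^ 2) := by
    have h0 := Finset.sum_mul_sq_le_sq_mul_sq Finset.univ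
      (fun i => Real.sqrt (p i) * (w i - t)) (fun i => Real.sqrt (p i) * (v i - s))
    have e1 : ∀ i ∈ Finset.univ (α := Fin n),
        (Real.sqrt (p i) * (w i - t)) * (Real.sqrt (p i) * (v i - s))
        = p i * ((w i - t) * (v i - s)) := fun i _ => by
      have hq := Real.mul_self_sqrt (hp i)
      linear_combination (w i - t) * (v i - s) * hq
    have e2 : ∀ i ∈ Finset.univ (α := Fin n),
        (Real.sqrt (p i) * (w i - t)) ^ 2 = p i * (w i - t) ^ 2 := fun i _ => by
      rw [mul_pow, Real.sq_sqrt (hp i)]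
    have e3 : ∀ i ∈ Finset.univ (α := Fin n),
        (Real.sqrt (p i) * (v i - s)) ^ 2 = p i * (v i - s) ^ 2 := fun i _ => by
      rw [mul_pow, Real.sq_sqrt (hp i)]
    rwa [Finset.sum_congr rfl e1, Finset.sum_congr rfl e2, Finset.sum_congr rfl e3] at h0
  have k1 := centered_le hn p w hp hs
  have k2 := centered_le hn p v hp hs
  rw [← hsv] at k2
  rw [← ht] at k1
  have hX0 : (0 : ℝ) ≤ ∑ i, w i ^ 2 := Finset.sum_nonneg fun i _ => sq_nonneg _
  have hY0 : (0 : ℝ) ≤ ∑ i, v i ^ 2 := Finset.sum_nonneg fun i _ => sq_nonneg _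
  have hA1 : (0 : ℝ) ≤ ∑ i, p i * (w i - t) ^ 2 :=
    Finset.sum_nonneg fun i _ => mul_nonneg (hp i) (sq_nonneg _)
  have hA2 : (0 : ℝ) ≤ ∑ i, p i * (v i - s) ^ 2 :=
    Finset.sum_nonneg fun i _ => mul_nonneg (hp i) (sq_nonneg _)
  have hgoal : ∑ i, (p i * (v i - s)) ^ 2 = ∑ i, w i ^ 2 := rfl
  rw [hgoal]
  rcases eq_or_lt_of_le hX0 with hX | hX
  · rw [← hX]; positivity
  · nlinarith [hcs, k1, k2, hXeq, hX]

noncomputable def smJ (p : Fin n → ℝ) :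
    EuclideanSpace ℝ (Fin n) →L[ℝ] EuclideanSpace ℝ (Fin n) :=
  LinearMap.toContinuousLinearMap
    { toFun := fun v => (WithLp.toLp 2 (fun i => p i * (v i - ∑ j, p j * v j)) : EuclideanSpace ℝ (Fin n))
      map_add' := by
        intro v w
        ext i
        have h : ∑ j, p j * (v j + w j) = ∑ j, p j * v j + ∑ j, p j * w j := by
          rw [← Finset.sum_add_distrib]; exact Finset.sum_congr rfl fun j _ => by ring
        show p i * ((v i + w i) - ∑ j, p j * (v j + w j)) = _
        rw [h]
        show _ = p i * (v i - ∑ j, p j * v j) + p i * (w i - ∑ j, p j * w j)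
        ring
      map_smul' := by
        intro c v
        ext i
        have h : ∑ j, p j * (c * v j) = c * ∑ j, p j * v j := by
          rw [Finset.mul_sum]; exact Finset.sum_congr rfl fun j _ => by ring
        show p i * ((c * v i) - ∑ j, p j * (c * v j)) = c * (p i * (v i - ∑ j, p j * v j))
        rw [h]; ring }

@[simp] lemma smJ_apply (p : Fin n → ℝ) (v : EuclideanSpace ℝ (Fin n)) (i : Fin n) :
    smJ p v i = p i * (v i - ∑ j, p j * v j) := rfl

lemma smJ_norm_le (hn : 0 < n) (p : Fin n → ℝ) (hp : ∀ i, 0 ≤ p i)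
    (hs : ∑ i, p i = 1) : ‖smJ p‖ ≤ 1 / 2 := by
  refine ContinuousLinearMap.opNorm_le_bound _ (by norm_num) fun v => ?_
  have h1 : ‖smJ p v‖ = Real.sqrt (∑ i, (p i * (v i - ∑ j, p j * v j)) ^ 2) := by
    rw [EuclideanSpace.norm_eq]
    congr 1
    exact Finset.sum_congr rfl fun i _ => by
      rw [smJ_apply, Real.norm_eq_abs, sq_abs]
  have h2 : ‖v‖ = Real.sqrt (∑ i, v i ^ 2) := by
    rw [EuclideanSpace.norm_eq]
    congr 1
    exact Finset.sum_congr rfl fun i _ => by rw [Real.norm_eq_abs, sq_abs]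
  rw [h1, h2]
  have hb := sq_sum_bound ⟨⟨0, hn⟩⟩ p v hp hs
  calc Real.sqrt (∑ i, (p i * (v i - ∑ j, p j * v j)) ^ 2)
      ≤ Real.sqrt (1 / 4 * ∑ i, v i ^ 2) := Real.sqrt_le_sqrt hb
    _ = 1 / 2 * Real.sqrt (∑ i, v i ^ 2) := by
        rw [Real.sqrt_mul (by norm_num : (0:ℝ) ≤ 1/4),
          show (1/4 : ℝ) = (1/2)^2 by norm_num, Real.sqrt_sq (by norm_num : (0:ℝ) ≤ 1/2)]

lemma softmaxE_hasFDerivAt (hn : 0 < n) (z : EuclideanSpace ℝ (Fin n)) :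
    HasFDerivAt softmaxE (smJ (softmaxE z)) z := by
  have hS0 : 0 < ∑ j, Real.exp (z j) :=
    Finset.sum_pos (fun j _ => Real.exp_pos _) ⟨⟨0, hn⟩, Finset.mem_univ _⟩
  set P : Fin n → (EuclideanSpace ℝ (Fin n) →L[ℝ] ℝ) :=
    fun i => EuclideanSpace.proj i with hP
  have hproj : ∀ i, HasFDerivAt (fun w : EuclideanSpace ℝ (Fin n) => w i) (P i) z :=
    fun i => (P i).hasFDerivAt
  have hexp : ∀ i, HasFDerivAt (fun w : EuclideanSpace ℝ (Fin n) => Real.exp (w i))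
      (Real.exp (z i) • P i) z :=
    fun i => by have := (Real.hasDerivAt_exp (z i)).comp_hasFDerivAt z (hproj i); exact this
  have hSum : HasFDerivAt (fun w : EuclideanSpace ℝ (Fin n) => ∑ j, Real.exp (w j))
      (∑ j, Real.exp (z j) • P j) z := HasFDerivAt.fun_sum fun j _ => hexp j
  have hInv : HasFDerivAt (fun w : EuclideanSpace ℝ (Fin n) => (∑ j, Real.exp (w j))⁻¹)
      ((-((∑ j, Real.exp (z j)) ^ 2)⁻¹) • ∑ j, Real.exp (z j) • P j) z :=
    (hasDerivAt_inv hS0.ne').comp_hasFDerivAt z hSum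
  set φ := PiLp.continuousLinearEquiv 2 ℝ (fun _ : Fin n => ℝ) with hφ
  have key : HasFDerivAt (⇑φ ∘ softmaxE)
      ((φ : EuclideanSpace ℝ (Fin n) →L[ℝ] (Fin n → ℝ)).comp (smJ (softmaxE z))) z := by
    apply hasFDerivAt_pi''
    intro i
    have hmul := (hexp i).fun_mul hInv
    have heq : (fun w : EuclideanSpace ℝ (Fin n) => (⇑φ ∘ softmaxE) w i)
        = fun w : EuclideanSpace ℝ (Fin n) => Real.exp (w i) * (∑ j, Real.exp (w j))⁻¹ := by
      funext w
      simp only [Function.comp_apply]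
      show softmaxE w i = _
      rw [softmaxE, WithLp.ofLp_toLp, div_eq_mul_inv]
    rw [heq]
    convert hmul using 1
    · rfl
    refine ContinuousLinearMap.ext fun v => ?_
    simp only [ContinuousLinearMap.coe_comp', Function.comp_apply,
      ContinuousLinearMap.proj_apply, ContinuousLinearMap.add_apply,
      ContinuousLinearMap.coe_smul', Pi.smul_apply, ContinuousLinearMap.coe_sum',
      Finset.sum_apply, smul_eq_mul]
    show smJ (softmaxE z) v i = _
    rw [smJ_apply]
    have hPv : ∀ j, P j v = v j := fun j => rfl
    simp only [hPv]
    have hsum2 : ∑ j, softmaxE z j * v j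
        = (∑ j, Real.exp (z j) * v j) / (∑ j, Real.exp (z j)) := by
      rw [Finset.sum_div]
      exact Finset.sum_congr rfl fun j _ => by rw [softmaxE, WithLp.ofLp_toLp]; ring
    rw [hsum2, softmaxE]
    show Real.exp (z i) / (∑ j, Real.exp (z j)) *
        (v i - (∑ j, Real.exp (z j) * v j) / (∑ j, Real.exp (z j))) = _
    field_simp
    ring
  exact (ContinuousLinearEquiv.comp_hasFDerivAt_iff φ).mp key

end Aux

/-- softmax is `1/2`-Lipschitz in the Euclidean norm. -/
theorem softmax_lipschitz_half {n : ℕ} (z z' : EuclideanSpace ℝ (Fin n)) :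
    ‖softmaxE z - softmaxE z'‖ ≤ (1 / 2) * ‖z - z'‖ := by
  rcases Nat.eq_zero_or_pos n with hn | hn
  · subst hn
    have h : softmaxE z = softmaxE z' := Subsingleton.elim _ _
    rw [h, sub_self, norm_zero]
    positivity
  · have hp : ∀ x : EuclideanSpace ℝ (Fin n), ∀ i, 0 ≤ softmaxE x i := fun x i =>
      div_nonneg (Real.exp_pos _).le
        (Finset.sum_nonneg fun j _ => (Real.exp_pos _).le)
    have hs : ∀ x : EuclideanSpace ℝ (Fin n), ∑ i, softmaxE x i = 1 := fun x => by
      have hS0 : (0:ℝ) < ∑ j, Real.exp (x j) :=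
        Finset.sum_pos (fun j _ => Real.exp_pos _) ⟨⟨0, hn⟩, Finset.mem_univ _⟩
      show ∑ i, Real.exp (x i) / (∑ j, Real.exp (x j)) = 1
      rw [← Finset.sum_div, div_self hS0.ne']
    have hder : ∀ x ∈ (Set.univ : Set (EuclideanSpace ℝ (Fin n))),
        HasFDerivWithinAt softmaxE (smJ (softmaxE x)) Set.univ x :=
      fun x _ => (softmaxE_hasFDerivAt hn x).hasFDerivWithinAt
    have hbound : ∀ x ∈ (Set.univ : Set (EuclideanSpace ℝ (Fin n))),
        ‖smJ (softmaxE x)‖ ≤ 1 / 2 :=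
      fun x _ => smJ_norm_le hn _ (hp x) (hs x)
    exact convex_univ.norm_image_sub_le_of_norm_hasFDerivWithin_le hder hbound
      (Set.mem_univ z') (Set.mem_univ z)
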